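/- In speculative decoding, if token x drawn from distribution Q is accepted with probability min(1, P(x)/Q(x)), and upon rejection a new token is drawn from norm(max(0, P - Q)), then the resulting output token is distributed exactly according to P. -/
import Mathlib


open Finset

lemma spec_min_eq {P Q : ℝ} (hP : 0 ≤ P) (hQ : 0 ≤ Q) :
    Q * min 1 (P / Q) = min Q P := by
  rcases eq_or_lt_of_le hQ with h | h
  · simp [← h, le_antisymm (by simp [← h] : min (0:ℝ) P ≤ 0) (le_min le_rfl hP)]
  · rw [mul_min_of_nonneg _ _ h.le, mul_one, mul_div_cancel₀ _ h.ne']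

/-- Speculative decoding correctness: accepting x ~ Q with probability
min(1, P(x)/Q(x)) and resampling upon rejection from norm(max(0, P - Q))
yields output distributed exactly as P. -/
theorem speculative_decoding_correct {V : Type*} [Fintype V]
    (P Q : V → ℝ) (hP0 : ∀ x, 0 ≤ P x) (hQ0 : ∀ x, 0 ≤ Q x)
    (hP1 : ∑ x, P x = 1) (hQ1 : ∑ x, Q x = 1) (hne : P ≠ Q) :
    ∀ x, Q x * min 1 (P x / Q x) +
      (1 - ∑ y, Q y * min 1 (P y / Q y)) *
        (max 0 (P x - Q x) / ∑ y, max 0 (P y - Q y)) = P x := by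
  have hmin : ∀ x, Q x * min 1 (P x / Q x) = min (Q x) (P x) :=
    fun x => spec_min_eq (hP0 x) (hQ0 x)
  have hsub : ∀ x, P x - min (Q x) (P x) = max 0 (P x - Q x) := by
    intro x
    rcases le_total (Q x) (P x) with h | h
    · rw [min_eq_left h, max_eq_right (by linarith)]
    · rw [min_eq_right h, max_eq_left (by linarith)]
      ring
  have hcoef : 1 - ∑ y, Q y * min 1 (P y / Q y) = ∑ y, max 0 (P y - Q y) := by
    simp_rw [hmin]
    rw [← hP1, ← Finset.sum_sub_distrib]
    exact Finset.sum_congr rfl fun y _ => hsub y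
  have hSpos : 0 < ∑ y, max 0 (P y - Q y) := by
    rcases lt_or_eq_of_le (Finset.sum_nonneg fun y _ => le_max_left 0 (P y - Q y)) with h | h
    · exact h
    · exfalso
      have hle : ∀ y, P y ≤ Q y := by
        intro y
        have := (Finset.sum_eq_zero_iff_of_nonneg
          (fun y _ => le_max_left 0 (P y - Q y))).mp h.symm y (Finset.mem_univ y)
        by_contra hc
        push_neg at hc
        have : (0:ℝ) < max 0 (P y - Q y) := lt_max_of_lt_right (by linarith)
        linarith
      apply hne
      funext y
      by_contra hc
      have hlt : P y < Q y := lt_of_le_of_ne (hle y) hc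
      have h1 : ∑ x, P x < ∑ x, Q x :=
        Finset.sum_lt_sum (fun x _ => hle x) ⟨y, Finset.mem_univ y, hlt⟩
      rw [hP1, hQ1] at h1
      exact lt_irrefl _ h1
  intro x
  rw [hmin, hcoef, mul_div_assoc', mul_comm, mul_div_assoc,
    div_self hSpos.ne', mul_one, ← hsub x]
  ring
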